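/- Let X ⊆ ℝ^d and let μ be a Borel probability measure on X that is absolutely continuous with respect to d-dimensional Lebesgue measure with density ρ ∈ L². Then the correlation dimension of μ exists and equals d; i.e., lim_{r→0} log(∫ μ(B(x,r)) dμ(x)) / log r = d. -/

import Mathlib

open MeasureTheory Filter Metric Topology
open scoped ENNReal NNReal

section CorrDimAux

open Set
open scoped ENNReal NNReal

variable {d : ℕ}
local notation "E" => EuclideanSpace ℝ (Fin d)

private lemma measU {r : ℝ} : MeasurableSet {p : E × E | dist p.2 p.1 < r} :=
  (isOpen_lt (continuous_dist.comp (continuous_snd.prodMk continuous_fst))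
    continuous_const).measurableSet

private lemma meas_ball (μ : Measure E) [SFinite μ] (r : ℝ) :
    Measurable fun x : E => μ (ball x r) := by
  have := measurable_measure_prodMk_left (ν := μ) (measU (d := d) (r := r))
  simpa [ball, Set.preimage] using this

private lemma prodU (μ ν : Measure E) [SFinite μ] [SFinite ν] (r : ℝ) :
    (μ.prod ν) {p : E × E | dist p.2 p.1 < r} = ∫⁻ x, ν (ball x r) ∂μ := by
  rw [Measure.prod_apply measU]; rfl

private lemma sq_lintegral_le (ν : Measure E) (f : E → ℝ≥0∞) (hf : AEMeasurable f ν) :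
    (∫⁻ x, f x ∂ν) ^ 2 ≤ ν univ * ∫⁻ x, f x ^ 2 ∂ν := by
  have h2 : Real.HolderConjugate 2 2 := by constructor <;> norm_num
  have h := ENNReal.lintegral_mul_le_Lp_mul_Lq ν h2 hf (aemeasurable_const (b := (1 : ℝ≥0∞)))
  simp only [Pi.mul_apply, mul_one, ENNReal.one_rpow, lintegral_const, one_mul] at h
  calc (∫⁻ x, f x ∂ν) ^ 2
      ≤ ((∫⁻ x, f x ^ (2 : ℝ) ∂ν) ^ (1 / (2 : ℝ)) * (ν univ) ^ (1 / (2 : ℝ))) ^ 2 :=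
        pow_le_pow_left' h 2
    _ = (∫⁻ x, f x ^ (2 : ℝ) ∂ν) * ν univ := by
        rw [mul_pow, ← ENNReal.rpow_natCast (_ ^ (1 / (2 : ℝ))),
          ← ENNReal.rpow_natCast ((ν univ) ^ (1 / (2 : ℝ))), ← ENNReal.rpow_mul,
          ← ENNReal.rpow_mul]
        norm_num
    _ = ν univ * ∫⁻ x, f x ^ 2 ∂ν := by
        rw [mul_comm]; congr 1; apply lintegral_congr; intro x
        rw [← ENNReal.rpow_natCast (f x)]; norm_num

private lemma sq_ball_le (μ : Measure E) [IsFiniteMeasure μ] {s : ℝ} :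
    ∫⁻ z, (μ (ball z s)) ^ 2 ∂volume
      ≤ volume (ball (0 : E) s) * ∫⁻ x, μ (ball x (2 * s)) ∂μ := by
  set W : Set (E × (E × E)) := {q | dist q.2.1 q.1 < s ∧ dist q.2.2 q.1 < s} with hWdef
  have hW : MeasurableSet W := by
    refine (IsOpen.measurableSet ?_)
    apply IsOpen.inter
    · exact isOpen_lt (continuous_dist.comp
        ((continuous_fst.comp continuous_snd).prodMk continuous_fst)) continuous_const
    · exact isOpen_lt (continuous_dist.comp
        ((continuous_snd.comp continuous_snd).prodMk continuous_fst)) continuous_const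
  have h1 : ∫⁻ z, (μ (ball z s)) ^ 2 ∂volume = (volume.prod (μ.prod μ)) W := by
    rw [Measure.prod_apply hW]
    refine lintegral_congr fun z => ?_
    have : Prod.mk z ⁻¹' W = ball z s ×ˢ ball z s := by
      ext p; simp [hWdef, mem_ball, and_comm]
    rw [this, Measure.prod_prod, sq]
  have h2 : (volume.prod (μ.prod μ)) W
      = ∫⁻ w, volume (ball w.1 s ∩ ball w.2 s) ∂(μ.prod μ) := by
    rw [Measure.prod_apply_symm hW]
    refine lintegral_congr fun w => ?_
    congr 1
    ext z; simp [hWdef, mem_ball, dist_comm]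
  have h3 : ∀ w : E × E, volume (ball w.1 s ∩ ball w.2 s)
      ≤ ({p : E × E | dist p.2 p.1 < 2 * s}).indicator (fun _ => volume (ball (0 : E) s)) w := by
    intro w
    by_cases hw : dist w.2 w.1 < 2 * s
    · rw [Set.indicator_of_mem (show w ∈ {p : E × E | dist p.2 p.1 < 2 * s} from hw)]
      calc volume (ball w.1 s ∩ ball w.2 s) ≤ volume (ball w.1 s) :=
            measure_mono inter_subset_left
        _ = volume (ball (0 : E) s) := Measure.addHaar_ball_center volume w.1 s
    · rw [Set.indicator_of_notMem (show w ∉ {p : E × E | dist p.2 p.1 < 2 * s} from hw)]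
      have : ball w.1 s ∩ ball w.2 s = ∅ := by
        ext z
        simp only [mem_inter_iff, mem_ball, mem_empty_iff_false, iff_false, not_and]
        intro h1z h2z
        exact absurd (calc dist w.2 w.1 ≤ dist w.2 z + dist z w.1 := dist_triangle _ _ _
          _ < s + s := by rw [dist_comm w.2 z]; exact add_lt_add h2z h1z
          _ = 2 * s := by ring) hw
      simp [this]
  calc ∫⁻ z, (μ (ball z s)) ^ 2 ∂volume
      = ∫⁻ w, volume (ball w.1 s ∩ ball w.2 s) ∂(μ.prod μ) := by rw [h1, h2]
    _ ≤ ∫⁻ w, ({p : E × E | dist p.2 p.1 < 2 * s}).indicator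
          (fun _ => volume (ball (0 : E) s)) w ∂(μ.prod μ) := lintegral_mono h3
    _ = volume (ball (0 : E) s) * (μ.prod μ) {p : E × E | dist p.2 p.1 < 2 * s} :=
        lintegral_indicator_const measU _
    _ = volume (ball (0 : E) s) * ∫⁻ x, μ (ball x (2 * s)) ∂μ := by rw [prodU]

private lemma restrict_ball_ge (μ : Measure E) [IsFiniteMeasure μ] {s R : ℝ} (hs1 : s ≤ 1) :
    volume (ball (0 : E) s) * μ (closedBall 0 R)
      ≤ ∫⁻ z in closedBall (0 : E) (R + 1), μ (ball z s) ∂volume := by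
  have key : ∫⁻ z in closedBall (0 : E) (R + 1), μ (ball z s) ∂volume
      = ∫⁻ x, (volume.restrict (closedBall (0 : E) (R + 1))) (ball x s) ∂μ := by
    rw [← prodU, Measure.prod_apply_symm measU]
    refine lintegral_congr fun x => ?_
    congr 1
    ext z; simp [mem_ball, dist_comm]
  rw [key]
  calc volume (ball (0 : E) s) * μ (closedBall 0 R)
      = ∫⁻ _x in closedBall (0 : E) R, volume (ball (0 : E) s) ∂μ := by
        rw [setLIntegral_const, mul_comm]
    _ ≤ ∫⁻ x in closedBall (0 : E) R,
          (volume.restrict (closedBall (0 : E) (R + 1))) (ball x s) ∂μ := by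
        refine setLIntegral_mono' measurableSet_closedBall fun x hx => ?_
        rw [Measure.restrict_apply measurableSet_ball]
        have hsub : ball x s ⊆ closedBall (0 : E) (R + 1) := by
          intro z hz
          rw [mem_closedBall]
          calc dist z 0 ≤ dist z x + dist x 0 := dist_triangle _ _ _
            _ ≤ s + R := add_le_add (le_of_lt hz) hx
            _ ≤ R + 1 := by linarith
        rw [inter_eq_self_of_subset_left hsub]
        exact (Measure.addHaar_ball_center volume x s).ge
    _ ≤ ∫⁻ x, (volume.restrict (closedBall (0 : E) (R + 1))) (ball x s) ∂μ :=
        setLIntegral_le_lintegral _ _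

private lemma mul_le_sq_add_sq (a b : ℝ≥0∞) : a * b ≤ a ^ 2 + b ^ 2 := by
  rcases le_total a b with h | h
  · calc a * b ≤ b * b := mul_le_mul_left h b
      _ = b ^ 2 := (sq b).symm
      _ ≤ a ^ 2 + b ^ 2 := le_add_self
  · calc a * b ≤ a * a := mul_le_mul_right h a
      _ = a ^ 2 := (sq a).symm
      _ ≤ a ^ 2 + b ^ 2 := self_le_add_right _ _

private lemma upper_bound_aux (μ : Measure E) [IsFiniteMeasure μ] (G : E → ℝ≥0∞)
    (hGm : Measurable G) (hμ : μ = volume.withDensity G) (r : ℝ) :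
    ∫⁻ x, μ (ball x r) ∂μ ≤ 2 * (∫⁻ x, G x ^ 2 ∂volume) * volume (ball (0 : E) r) := by
  have hball : ∀ x : E, μ (ball x r) = ∫⁻ y in ball x r, G y ∂volume := by
    intro x; rw [hμ, withDensity_apply _ measurableSet_ball]
  have hmb : Measurable fun x : E => μ (ball x r) := meas_ball μ r
  have step1 : ∫⁻ x, μ (ball x r) ∂μ = ∫⁻ x, G x * μ (ball x r) ∂volume := by
    conv_lhs => rw [hμ]
    rw [lintegral_withDensity_eq_lintegral_mul volume hGm (hμ ▸ hmb)]
    rw [← hμ]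
    rfl
  rw [step1]
  have step2 : ∀ x : E, G x * μ (ball x r)
      ≤ G x ^ 2 * volume (ball (0 : E) r) + ∫⁻ y in ball x r, G y ^ 2 ∂volume := by
    intro x
    rw [hball x, ← lintegral_const_mul _ hGm]
    calc ∫⁻ y in ball x r, G x * G y ∂volume
        ≤ ∫⁻ y in ball x r, (G x ^ 2 + G y ^ 2) ∂volume :=
          lintegral_mono fun y => mul_le_sq_add_sq _ _
      _ = G x ^ 2 * volume (ball x r) + ∫⁻ y in ball x r, G y ^ 2 ∂volume := by
          rw [lintegral_add_left measurable_const]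
          simp [setLIntegral_const]
      _ = G x ^ 2 * volume (ball (0 : E) r) + ∫⁻ y in ball x r, G y ^ 2 ∂volume := by
          rw [Measure.addHaar_ball_center]
  calc ∫⁻ x, G x * μ (ball x r) ∂volume
      ≤ ∫⁻ x, (G x ^ 2 * volume (ball (0 : E) r)
          + ∫⁻ y in ball x r, G y ^ 2 ∂volume) ∂volume := lintegral_mono step2
    _ = (∫⁻ x, G x ^ 2 ∂volume) * volume (ball (0 : E) r)
        + ∫⁻ x, ∫⁻ y in ball x r, G y ^ 2 ∂volume ∂volume := by
        rw [lintegral_add_left ((hGm.pow_const 2).mul_const _),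
          lintegral_mul_const _ (hGm.pow_const 2)]
    _ = 2 * (∫⁻ x, G x ^ 2 ∂volume) * volume (ball (0 : E) r) := by
        have swap : ∫⁻ x, ∫⁻ y in ball x r, G y ^ 2 ∂volume ∂volume
            = (∫⁻ y, G y ^ 2 ∂volume) * volume (ball (0 : E) r) := by
          have e1 : ∀ x : E, ∫⁻ y in ball x r, G y ^ 2 ∂volume
              = ∫⁻ y, ({p : E × E | dist p.2 p.1 < r}).indicator
                  (fun p => G p.2 ^ 2) (x, y) ∂volume := by
            intro x
            rw [← lintegral_indicator measurableSet_ball]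
            refine lintegral_congr fun y => ?_
            by_cases h : y ∈ ball x r
            · rw [indicator_of_mem h,
                Set.indicator_of_mem (show (x, y) ∈ {p : E × E | dist p.2 p.1 < r} from h)]
            · rw [indicator_of_notMem h,
                Set.indicator_of_notMem (show (x, y) ∉ {p : E × E | dist p.2 p.1 < r} from h)]
          simp only [e1]
          rw [lintegral_lintegral_swap]
          · have e2 : ∀ y : E, ∫⁻ x, ({p : E × E | dist p.2 p.1 < r}).indicator
                (fun p => G p.2 ^ 2) (x, y) ∂volume = G y ^ 2 * volume (ball y r) := by
              intro y
              rw [← lintegral_indicator_const measurableSet_ball (G y ^ 2)]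
              refine lintegral_congr fun x => ?_
              by_cases h : x ∈ ball y r
              · rw [Set.indicator_of_mem (show (x, y) ∈ {p : E × E | dist p.2 p.1 < r} from by
                  simpa [dist_comm] using h), Set.indicator_of_mem h]
              · rw [Set.indicator_of_notMem (show (x, y) ∉ {p : E × E | dist p.2 p.1 < r} from by
                  simpa [dist_comm] using h), Set.indicator_of_notMem h]
            simp only [e2]
            calc ∫⁻ y, G y ^ 2 * volume (ball y r) ∂volume
                = ∫⁻ y, G y ^ 2 * volume (ball (0 : E) r) ∂volume :=
                  lintegral_congr fun y => by rw [Measure.addHaar_ball_center]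
              _ = (∫⁻ y, G y ^ 2 ∂volume) * volume (ball (0 : E) r) :=
                  lintegral_mul_const _ (hGm.pow_const 2)
          · exact (Measurable.indicator ((hGm.comp measurable_snd).pow_const 2) measU).aemeasurable
        rw [swap]; ring

private lemma ennreal_combine {a K L : ℝ≥0∞} (ha0 : a ≠ 0) (haT : a ≠ ⊤) (hK0 : K ≠ 0)
    (hKT : K ≠ ⊤) (h : a * a * 4⁻¹ ≤ K * a * L) : a / (4 * K) ≤ L := by
  rw [ENNReal.div_le_iff_le_mul (Or.inl (by simp [hK0])) (Or.inl (ENNReal.mul_ne_top (by norm_num) hKT))]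
  calc a = (a * a * 4⁻¹) * (4 * a⁻¹) := by
        rw [show a * a * 4⁻¹ * (4 * a⁻¹) = (a * (a * a⁻¹)) * (4⁻¹ * (4 : ℝ≥0∞)) from by ring,
          ENNReal.mul_inv_cancel ha0 haT,
          ENNReal.inv_mul_cancel (by norm_num) (by norm_num)]
        simp
    _ ≤ (K * a * L) * (4 * a⁻¹) := mul_le_mul_left h _
    _ = L * (4 * K) * (a * a⁻¹) := by ring
    _ = L * (4 * K) := by rw [ENNReal.mul_inv_cancel ha0 haT, mul_one]

end CorrDimAux

/-- Correlation integral: `∫ μ(B(x,r)) dμ(x)`. -/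
noncomputable def corrIntegral {X : Type*} [PseudoMetricSpace X] [MeasurableSpace X]
    (μ : Measure X) (r : ℝ) : ℝ :=
  ∫ x, (μ (ball x r)).toReal ∂μ

/-- If `μ` is a Borel probability measure on a subset `X` of `ℝ^d` which is absolutely
continuous with respect to `d`-dimensional Lebesgue measure, with density `ρ ∈ L²`, then the
correlation dimension of `μ` exists and equals `d`. -/
theorem correlation_dimension_of_L2_density (d : ℕ)
    (Xset : Set (EuclideanSpace ℝ (Fin d)))
    (ρ : EuclideanSpace ℝ (Fin d) → ℝ)
    (μ : Measure (EuclideanSpace ℝ (Fin d)))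
    (hμ : μ = volume.withDensity (fun x => ENNReal.ofReal (ρ x)))
    (hprob : IsProbabilityMeasure μ)
    (hsupp : μ Xsetᶜ = 0)
    (hρ : MemLp ρ 2 volume) :
    Tendsto (fun r : ℝ => Real.log (corrIntegral μ r) / Real.log r)
      (𝓝[>] 0) (𝓝 (d : ℝ)) := by
  classical
  obtain ⟨g, hgm, hg⟩ : ∃ g, StronglyMeasurable g ∧ ρ =ᵐ[volume] g :=
    ⟨hρ.1.mk ρ, hρ.1.stronglyMeasurable_mk, hρ.1.ae_eq_mk⟩
  set G : EuclideanSpace ℝ (Fin d) → ℝ≥0∞ := fun x => ENNReal.ofReal (g x) with hGdef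
  have hGm : Measurable G := ENNReal.measurable_ofReal.comp hgm.measurable
  have hμG : μ = volume.withDensity G := by
    rw [hμ]; exact withDensity_congr_ae (hg.mono fun x hx => by simp [hGdef, hx])
  have hg2 : MemLp g 2 volume := hρ.ae_eq hg
  set I2 : ℝ≥0∞ := ∫⁻ x, G x ^ 2 ∂volume with hI2def
  have hI2T : I2 ≠ ⊤ := by
    have h1 : ∫⁻ x, (‖g x‖₊ : ℝ≥0∞) ^ ((2 : ℝ≥0∞).toReal) ∂volume < ⊤ :=
      lintegral_rpow_enorm_lt_top_of_eLpNorm_lt_top (by norm_num) (by norm_num) hg2.2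
    refine ne_top_of_le_ne_top h1.ne (lintegral_mono fun x => ?_)
    calc G x ^ 2 ≤ (‖g x‖₊ : ℝ≥0∞) ^ 2 :=
          pow_le_pow_left' (Real.ofReal_le_enorm (g x)) 2
      _ = (‖g x‖₊ : ℝ≥0∞) ^ ((2 : ℝ≥0∞).toReal) := by
          rw [show ((2 : ℝ≥0∞).toReal) = ((2 : ℕ) : ℝ) by norm_num, ENNReal.rpow_natCast]
  set c : ℝ≥0∞ := volume (ball (0 : EuclideanSpace ℝ (Fin d)) 1) with hcdef
  have hc0 : c ≠ 0 := (measure_ball_pos volume _ one_pos).ne'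
  have hcT : c ≠ ⊤ := measure_ball_lt_top.ne
  have hvol : ∀ t : ℝ, 0 < t →
      volume (ball (0 : EuclideanSpace ℝ (Fin d)) t) = ENNReal.ofReal (t ^ d) * c := by
    intro t ht
    rw [hcdef, Measure.addHaar_ball_of_pos volume _ ht, finrank_euclideanSpace_fin]
  obtain ⟨n, hn⟩ : ∃ n : ℕ, (2 : ℝ≥0∞)⁻¹ ≤ μ (closedBall (0 : EuclideanSpace ℝ (Fin d)) n) := by
    have hmono : Monotone fun n : ℕ => closedBall (0 : EuclideanSpace ℝ (Fin d)) (n : ℝ) :=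
      fun m k h => closedBall_subset_closedBall (by exact_mod_cast h)
    have hun : (⋃ n : ℕ, closedBall (0 : EuclideanSpace ℝ (Fin d)) (n : ℝ)) = Set.univ := by
      ext x
      simp only [Set.mem_iUnion, mem_closedBall, Set.mem_univ, iff_true]
      exact exists_nat_ge (dist x 0)
    have ht := tendsto_measure_iUnion_atTop (μ := μ) hmono
    rw [hun, measure_univ] at ht
    have h2 := (tendsto_order.1 ht).1 2⁻¹ (by norm_num)
    exact h2.exists.imp fun k hk => hk.le
  set K : ℝ≥0∞ := volume (closedBall (0 : EuclideanSpace ℝ (Fin d)) ((n : ℝ) + 1)) with hKdef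
  have hK0 : K ≠ 0 := (measure_closedBall_pos volume _ (by positivity)).ne'
  have hKT : K ≠ ⊤ := measure_closedBall_lt_top.ne
  set L : ℝ → ℝ≥0∞ := fun r => ∫⁻ x, μ (ball x r) ∂μ with hLdef
  have hL1 : ∀ r, L r ≤ 1 := by
    intro r
    calc L r ≤ ∫⁻ _x, 1 ∂μ := lintegral_mono fun x => prob_le_one
      _ = 1 := by simp
  have hLT : ∀ r, L r ≠ ⊤ := fun r => (lt_of_le_of_lt (hL1 r) ENNReal.one_lt_top).ne
  have hcorr : ∀ r, corrIntegral μ r = (L r).toReal := by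
    intro r
    exact integral_toReal ((meas_ball μ r).aemeasurable)
      (ae_of_all _ fun x => lt_of_le_of_lt prob_le_one ENNReal.one_lt_top)
  have hub : ∀ r : ℝ, L r ≤ 2 * I2 * volume (ball (0 : EuclideanSpace ℝ (Fin d)) r) :=
    fun r => upper_bound_aux μ G hGm hμG r
  have hlow : ∀ r : ℝ, 0 < r → r ≤ 2 →
      ENNReal.ofReal ((r / 2) ^ d) * c / (4 * K) ≤ L r := by
    intro r hr hr2
    have hs0 : 0 < r / 2 := by positivity
    have hs1 : r / 2 ≤ 1 := by linarith
    set a : ℝ≥0∞ := volume (ball (0 : EuclideanSpace ℝ (Fin d)) (r / 2)) with hadef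
    have ha0 : a ≠ 0 := (measure_ball_pos volume _ hs0).ne'
    have haT : a ≠ ⊤ := measure_ball_lt_top.ne
    have h1 : ∫⁻ z, (μ (ball z (r / 2))) ^ 2 ∂volume ≤ a * L r := by
      have hh := sq_ball_le μ (s := r / 2)
      rwa [show 2 * (r / 2) = r by ring] at hh
    have h2 : a * μ (closedBall 0 (n : ℝ))
        ≤ ∫⁻ z in closedBall (0 : EuclideanSpace ℝ (Fin d)) ((n : ℝ) + 1),
            μ (ball z (r / 2)) ∂volume := restrict_ball_ge μ hs1
    have h3 : (∫⁻ z in closedBall (0 : EuclideanSpace ℝ (Fin d)) ((n : ℝ) + 1),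
          μ (ball z (r / 2)) ∂volume) ^ 2
        ≤ K * ∫⁻ z, (μ (ball z (r / 2))) ^ 2 ∂volume := by
      have hcs := sq_lintegral_le
        (volume.restrict (closedBall (0 : EuclideanSpace ℝ (Fin d)) ((n : ℝ) + 1)))
        (fun z => μ (ball z (r / 2))) (meas_ball μ (r / 2)).aemeasurable
      rw [Measure.restrict_apply_univ] at hcs
      exact hcs.trans (mul_le_mul_right (setLIntegral_le_lintegral _ _) K)
    have h4 : a * a * 4⁻¹ ≤ K * a * L r := by
      have e0 : a * a * 4⁻¹ = (a * 2⁻¹) ^ 2 := by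
        have e00 : ((2 : ℝ≥0∞)⁻¹) ^ 2 = 4⁻¹ := by
          rw [← ENNReal.inv_pow]; norm_num
        rw [mul_pow, e00, sq]
      calc a * a * 4⁻¹ = (a * 2⁻¹) ^ 2 := e0
        _ ≤ (a * μ (closedBall 0 (n : ℝ))) ^ 2 :=
            pow_le_pow_left' (mul_le_mul_right hn a) 2
        _ ≤ (∫⁻ z in closedBall (0 : EuclideanSpace ℝ (Fin d)) ((n : ℝ) + 1),
              μ (ball z (r / 2)) ∂volume) ^ 2 := pow_le_pow_left' h2 2
        _ ≤ K * ∫⁻ z, (μ (ball z (r / 2))) ^ 2 ∂volume := h3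
        _ ≤ K * (a * L r) := mul_le_mul_right h1 K
        _ = K * a * L r := by rw [mul_assoc]
    have hfin := ennreal_combine ha0 haT hK0 hKT h4
    rwa [hadef, hvol (r / 2) hs0] at hfin
  -- real constants
  have hcR : 0 < c.toReal := ENNReal.toReal_pos hc0 hcT
  have hKR : 0 < K.toReal := ENNReal.toReal_pos hK0 hKT
  set a₀ : ℝ := c.toReal / (2 ^ d * (4 * K.toReal)) with ha₀def
  have ha₀ : 0 < a₀ :=
    div_pos hcR (mul_pos (pow_pos two_pos d) (mul_pos four_pos hKR))
  set b₀ : ℝ := 2 * I2.toReal * c.toReal + a₀ with hb₀def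
  have hb₀ : 0 < b₀ := by
    have h1 : 0 ≤ 2 * I2.toReal * c.toReal := by positivity
    linarith
  have hreal : ∀ r : ℝ, 0 < r → r < 1 →
      a₀ * r ^ d ≤ corrIntegral μ r ∧ corrIntegral μ r ≤ b₀ * r ^ d := by
    intro r hr hr1
    rw [hcorr r]
    constructor
    · have hl := ENNReal.toReal_mono (hLT r) (hlow r hr (by linarith))
      refine le_trans (le_of_eq ?_) hl
      rw [ENNReal.toReal_div, ENNReal.toReal_mul, ENNReal.toReal_ofReal (by positivity),
        ENNReal.toReal_mul]
      rw [ha₀def, div_pow]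
      have h4 : ((4 : ℝ≥0∞)).toReal = 4 := by norm_num
      rw [h4]
      field_simp
    · have hu := ENNReal.toReal_mono
        (ENNReal.mul_ne_top (ENNReal.mul_ne_top (by norm_num) hI2T) measure_ball_lt_top.ne)
        (hub r)
      refine hu.trans ?_
      have heq : (2 * I2 * volume (ball (0 : EuclideanSpace ℝ (Fin d)) r)).toReal
          = 2 * I2.toReal * (r ^ d * c.toReal) := by
        rw [hvol r hr, ENNReal.toReal_mul, ENNReal.toReal_mul, ENNReal.toReal_mul,
          ENNReal.toReal_ofReal (by positivity)]
        norm_num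
      rw [heq]
      have hrd : (0 : ℝ) ≤ r ^ d := by positivity
      calc 2 * I2.toReal * (r ^ d * c.toReal)
          = (2 * I2.toReal * c.toReal) * r ^ d := by ring
        _ ≤ b₀ * r ^ d := by
            refine mul_le_mul_of_nonneg_right ?_ hrd
            rw [hb₀def]; linarith
  -- the limit
  have hlog : Tendsto (fun r : ℝ => Real.log r) (𝓝[>] 0) atBot :=
    Real.tendsto_log_nhdsGT_zero
  set M : ℝ := max |Real.log a₀| |Real.log b₀| with hMdef
  suffices hsuff : Tendsto
      (fun r : ℝ => Real.log (corrIntegral μ r) / Real.log r - d) (𝓝[>] 0) (𝓝 0) by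
    have := hsuff.add (tendsto_const_nhds (x := (d : ℝ)))
    simpa using this
  have hg0 : Tendsto (fun r : ℝ => M * |Real.log r|⁻¹) (𝓝[>] 0) (𝓝 0) := by
    have h1 : Tendsto (fun r : ℝ => |Real.log r|) (𝓝[>] 0) atTop :=
      tendsto_abs_atBot_atTop.comp hlog
    have h2 : Tendsto (fun r : ℝ => |Real.log r|⁻¹) (𝓝[>] 0) (𝓝 0) :=
      tendsto_inv_atTop_zero.comp h1
    simpa using h2.const_mul M
  refine squeeze_zero_norm' ?_ hg0
  have hev : ∀ᶠ r in 𝓝[>] (0 : ℝ), r ∈ Set.Ioo (0 : ℝ) 1 :=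
    Ioo_mem_nhdsGT_of_mem ⟨le_refl 0, zero_lt_one⟩
  filter_upwards [hev] with r hr
  obtain ⟨hr0, hr1⟩ := hr
  obtain ⟨hlo, hhi⟩ := hreal r hr0 hr1
  have hrd : (0 : ℝ) < r ^ d := by positivity
  have hC0 : 0 < corrIntegral μ r := lt_of_lt_of_le (by positivity) hlo
  have hlogr : Real.log r < 0 := Real.log_neg hr0 hr1
  have hlogr0 : Real.log r ≠ 0 := ne_of_lt hlogr
  have key : Real.log (corrIntegral μ r) / Real.log r - d
      = Real.log (corrIntegral μ r / r ^ d) / Real.log r := by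
    rw [Real.log_div hC0.ne' (ne_of_gt hrd), Real.log_pow]
    field_simp
  rw [key, norm_div, Real.norm_eq_abs, Real.norm_eq_abs]
  rw [div_eq_mul_inv]
  refine mul_le_mul_of_nonneg_right ?_ (inv_nonneg.2 (abs_nonneg _))
  -- |log (C / r^d)| ≤ M
  have ht0 : 0 < corrIntegral μ r / r ^ d := div_pos hC0 hrd
  have hta : a₀ ≤ corrIntegral μ r / r ^ d := (le_div_iff₀ hrd).2 (by linarith)
  have htb : corrIntegral μ r / r ^ d ≤ b₀ := (div_le_iff₀ hrd).2 (by linarith)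
  rcases le_or_gt 0 (Real.log (corrIntegral μ r / r ^ d)) with h | h
  · rw [abs_of_nonneg h]
    calc Real.log (corrIntegral μ r / r ^ d) ≤ Real.log b₀ :=
        Real.log_le_log ht0 htb
      _ ≤ |Real.log b₀| := le_abs_self _
      _ ≤ M := le_max_right _ _
  · rw [abs_of_neg h]
    calc -Real.log (corrIntegral μ r / r ^ d) ≤ -Real.log a₀ :=
          neg_le_neg (Real.log_le_log ha₀ hta)
      _ ≤ |Real.log a₀| := neg_le_abs _
      _ ≤ M := le_max_left _ _
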